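/- The moment-generating function of the Fock-basis energy distribution ρ_{l,l} of a coherent thermal state ρ(β,α) (α real) is M(t) = Σ_{l≥0} ρ_{l,l} e^{tl} = exp[α²(e^t - 1)/(1 - (e^t - 1)n_β)] / (1 - (e^t - 1)n_β), valid for e^t < 1 + 1/n_β. -/

import Mathlib

/-- The `l`-th (ordinary) Laguerre polynomial `L_l(z) = Σ_{i=0}^l (-1)^i C(l,l-i) z^i/i!`. -/
noncomputable def laguerre (l : ℕ) (z : ℝ) : ℝ :=
  ∑ i ∈ Finset.range (l + 1), (-1 : ℝ) ^ i * (l.choose (l - i)) * z ^ i / (Nat.factorial i : ℝ)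

lemma tsum_antidiag {F : ℕ × ℕ → ℝ} (h : Summable F) :
    ∑' x : ℕ × ℕ, F x = ∑' n : ℕ, ∑ kl ∈ Finset.HasAntidiagonal.antidiagonal n, F kl := by
  rw [← Finset.HasAntidiagonal.sigmaAntidiagonalEquivProd.tsum_eq F,
    Summable.tsum_sigma' (f := fun c : (Σ n : ℕ, Finset.HasAntidiagonal.antidiagonal n) =>
        F (Finset.HasAntidiagonal.sigmaAntidiagonalEquivProd c))
      (fun n => (hasSum_fintype _).summable)
      ((Equiv.summable_iff _).2 h)]
  apply tsum_congr
  intro n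
  rw [tsum_fintype]
  rw [← Finset.sum_finset_coe _ (Finset.HasAntidiagonal.antidiagonal n : Finset (ℕ × ℕ))]
  rfl

lemma laguerre_gen {p z : ℝ} (hp0 : 0 ≤ p) (hp1 : p < 1) (hz : z ≤ 0) :
    ∑' l : ℕ, p ^ l * laguerre l z = Real.exp (-(p * z) / (1 - p)) / (1 - p) := by
  set q : ℝ := -(z * p) with hq
  have hq0 : 0 ≤ q := by
    have := mul_nonneg (neg_nonneg.2 hz) hp0
    simpa [hq] using this
  have h1p : 0 < 1 - p := by linarith
  have hpn : ‖p‖ < 1 := by rw [Real.norm_eq_abs, abs_of_nonneg hp0]; exact hp1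
  set F : ℕ × ℕ → ℝ := fun x => ((x.2 + x.1).choose x.1 : ℝ) * p ^ x.2 * (q ^ x.1 / (Nat.factorial x.1 : ℝ)) with hF
  have hFnon : 0 ≤ F := by
    intro x
    apply mul_nonneg (mul_nonneg (by positivity) (pow_nonneg hp0 _))
    positivity
  have hinner : ∀ i : ℕ, Summable fun k => F (i, k) := by
    intro i
    simpa [hF, mul_comm, mul_assoc, mul_left_comm] using
      (summable_choose_mul_geometric_of_norm_lt_one i hpn).mul_left (q ^ i / (Nat.factorial i : ℝ))
  have hinner_sum : ∀ i : ℕ, ∑' k, F (i, k) = (q ^ i / (Nat.factorial i : ℝ)) * (1 / (1 - p)) ^ (i + 1) := by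
    intro i
    have : ∑' k, F (i, k) = (q ^ i / (Nat.factorial i : ℝ)) * ∑' k : ℕ, ((k + i).choose i : ℝ) * p ^ k := by
      rw [← tsum_mul_left]
      congr 1; funext k; simp [hF]; ring
    rw [this, tsum_choose_mul_geometric_of_norm_lt_one i hpn, one_div, ← inv_pow, one_div, inv_pow]
  have halg : ∀ i : ℕ, (1 / (1 - p)) * ((q / (1 - p)) ^ i / (Nat.factorial i : ℝ))
      = (q ^ i / (Nat.factorial i : ℝ)) * (1 / (1 - p)) ^ (i + 1) := by
    intro i
    rw [pow_succ, div_pow, div_pow, one_pow]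
    rw [div_mul_eq_mul_div, div_mul_eq_mul_div]
    field_simp [h1p.ne']
  have houter : Summable fun i : ℕ => (q ^ i / (Nat.factorial i : ℝ)) * (1 / (1 - p)) ^ (i + 1) := by
    have := (Real.summable_pow_div_factorial (q / (1 - p))).mul_left (1 / (1 - p))
    apply this.congr
    intro i
    exact halg i
  have hsum : Summable F := by
    rw [summable_prod_of_nonneg hFnon]
    refine ⟨hinner, ?_⟩
    apply houter.congr
    intro i
    exact (hinner_sum i).symm
  have key : ∀ l : ℕ, p ^ l * laguerre l z = ∑ kl ∈ Finset.HasAntidiagonal.antidiagonal l, F kl := by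
    intro l
    rw [Finset.Nat.sum_antidiagonal_eq_sum_range_succ_mk, laguerre, Finset.mul_sum]
    apply Finset.sum_congr rfl
    intro i hi
    have hil : i ≤ l := Nat.lt_succ_iff.mp (Finset.mem_range.mp hi)
    have hc : ((l - i) + i).choose i = l.choose (l - i) := by
      rw [Nat.sub_add_cancel hil]
      exact (Nat.choose_symm hil).symm
    have hps : p ^ l = p ^ i * p ^ (l - i) := by
      rw [← pow_add, Nat.add_sub_cancel' hil]
    simp only [hF, hc, hps]
    have : (-1 : ℝ) ^ i * z ^ i * p ^ i = q ^ i := by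
      rw [hq, ← neg_mul, ← mul_pow, ← mul_pow]; ring_nf
    field_simp
    rw [← this]
    ring
  calc ∑' l : ℕ, p ^ l * laguerre l z
      = ∑' l : ℕ, ∑ kl ∈ Finset.HasAntidiagonal.antidiagonal l, F kl := by
        exact tsum_congr key
    _ = ∑' x : ℕ × ℕ, F x := (tsum_antidiag hsum).symm
    _ = ∑' i : ℕ, ∑' k : ℕ, F (i, k) := Summable.tsum_prod' hsum hinner
    _ = ∑' i : ℕ, (1 / (1 - p)) * ((q / (1 - p)) ^ i / (Nat.factorial i : ℝ)) := by
        apply tsum_congr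
        intro i
        rw [hinner_sum i, ← halg i]
    _ = Real.exp (-(p * z) / (1 - p)) / (1 - p) := by
        rw [tsum_mul_left]
        have : Real.exp (q / (1 - p)) = ∑' i : ℕ, (q / (1 - p)) ^ i / (Nat.factorial i : ℝ) := by
          rw [Real.exp_eq_exp_ℝ, NormedSpace.exp_eq_tsum_div]
        rw [← this]
        rw [hq]
        rw [show -(z * p) = -(p * z) by ring]
        ring

/-- Moment-generating function of the Fock-basis energy distribution
`ρ_{l,l} = (e^{-α²/(n_β+1)}/(n_β+1))(n_β/(n_β+1))^l L_l(-α²/(n_β(n_β+1)))` of a coherent thermal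
state (`α` real): for `e^t < 1 + 1/n_β`,
`M(t) = Σ_l ρ_{l,l} e^{tl} = exp[α²(e^t-1)/(1-(e^t-1)n_β)]/(1-(e^t-1)n_β)`. -/
theorem coherent_thermal_mgf (α nβ t : ℝ) (hα : 0 < α) (hn : 0 < nβ)
    (ht : Real.exp t < 1 + 1 / nβ) :
    ∑' l : ℕ,
        (Real.exp (-α ^ 2 / (nβ + 1)) / (nβ + 1) * (nβ / (nβ + 1)) ^ l *
          laguerre l (-α ^ 2 / (nβ * (nβ + 1)))) * Real.exp (t * l)
      = Real.exp (α ^ 2 * (Real.exp t - 1) / (1 - (Real.exp t - 1) * nβ)) /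
          (1 - (Real.exp t - 1) * nβ) := by
  have hn1 : (0:ℝ) < nβ + 1 := by linarith
  set p : ℝ := nβ * Real.exp t / (nβ + 1) with hpdef
  set z : ℝ := -α ^ 2 / (nβ * (nβ + 1)) with hzdef
  have hp0 : 0 ≤ p := by positivity
  have hp1 : p < 1 := by
    rw [hpdef, div_lt_one hn1]
    have := (mul_lt_mul_iff_right₀ hn).2 ht
    rw [mul_add, mul_one, mul_one_div, div_self hn.ne'] at this
    linarith
  have hz : z ≤ 0 := by
    rw [hzdef]
    apply div_nonpos_of_nonpos_of_nonneg
    · nlinarith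
    · positivity
  have h1p : 0 < 1 - p := by linarith
  have hD : 1 - (Real.exp t - 1) * nβ = (nβ + 1) * (1 - p) := by
    rw [hpdef]
    field_simp
    ring
  have hDpos : 0 < 1 - (Real.exp t - 1) * nβ := by
    rw [hD]; positivity
  have step1 : ∀ l : ℕ,
      (Real.exp (-α ^ 2 / (nβ + 1)) / (nβ + 1) * (nβ / (nβ + 1)) ^ l *
        laguerre l z) * Real.exp (t * l)
      = (Real.exp (-α ^ 2 / (nβ + 1)) / (nβ + 1)) * (p ^ l * laguerre l z) := by
    intro l
    rw [mul_comm t (l : ℝ), Real.exp_nat_mul, hpdef, div_pow, div_pow, mul_pow]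
    ring
  rw [tsum_congr step1, tsum_mul_left, laguerre_gen hp0 hp1 hz]
  set w : ℝ := nβ + 1 - nβ * Real.exp t with hwdef
  have hw : 0 < w := by
    have : 1 - (Real.exp t - 1) * nβ = w := by rw [hwdef]; ring
    rw [this] at hDpos; exact hDpos
  have h1p' : 1 - p = w / (nβ + 1) := by
    rw [hpdef, hwdef]
    field_simp
  have hexp : -α ^ 2 / (nβ + 1) + -(p * z) / (1 - p)
      = α ^ 2 * (Real.exp t - 1) / (1 - (Real.exp t - 1) * nβ) := by
    have hDw : 1 - (Real.exp t - 1) * nβ = w := by rw [hwdef]; ring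
    rw [hDw, hpdef, hzdef, h1p']
    field_simp
    ring
  rw [div_mul_div_comm, ← Real.exp_add, hexp, hD]
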